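/- arXiv:2009.13428 — 3 statements merged into one kernel-verified Lean document; each statement's English description precedes it below -/
import Mathlib

section
/- Let A₁,…,Aₙ be square matrices (of possibly different sizes) that are invertible with exp(Aₖt) → 0 as t → ∞, let D₁,…,Dₙ be matrices of compatible dimensions with Dₖ𝟏 = −Aₖ𝟏 for each k, and let α be a probability row vector of the size of A₁. Then the function f(y₁,…,yₙ) = α·exp(A₁y₁)·D₁·exp(A₂y₂)·D₂ ⋯ exp(Aₙyₙ)·Dₙ·𝟏 integrates to 1 over [0,∞)^n; that is, ∫₀^∞ ⋯ ∫₀^∞ f(y₁,…,yₙ) dy₁⋯dyₙ = 1. -/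
open Matrix MeasureTheory Filter

set_option maxHeartbeats 1000000

/-- Iterated left-multiplication of a row vector by a chain of (rectangular) step
matrices `M 0, M 1, …`, yielding a row vector at every intermediate position. -/
noncomputable def chainRow {n : ℕ} (d : Fin (n + 1) → ℕ)
    (M : (k : Fin n) → Matrix (Fin (d k.castSucc)) (Fin (d k.succ)) ℝ)
    (v0 : Fin (d 0) → ℝ) : (k : Fin (n + 1)) → Fin (d k) → ℝ :=
  Fin.induction v0 (fun k ih => ih ᵥ* M k)

/-! ### Auxiliary lemmas -/

noncomputable def entryFunctional {m p : ℕ} (v : Fin m → ℝ) (u : Fin p → ℝ) :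
    Matrix (Fin m) (Fin p) ℝ →ₗ[ℝ] ℝ where
  toFun M := v ⬝ᵥ (M *ᵥ u)
  map_add' M N := by simp [Matrix.add_mulVec, dotProduct_add]
  map_smul' c M := by simp [Matrix.smul_mulVec, dotProduct_smul]

lemma hasDerivAt_dot_exp {m : ℕ} (A : Matrix (Fin m) (Fin m) ℝ)
    (v : Fin m → ℝ) (u : Fin m → ℝ) (t : ℝ) :
    HasDerivAt (fun s : ℝ => v ⬝ᵥ ((NormedSpace.exp (s • A)) *ᵥ u))
      (v ⬝ᵥ ((NormedSpace.exp (t • A)) *ᵥ (A *ᵥ u))) t := by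
  letI : SeminormedRing (Matrix (Fin m) (Fin m) ℝ) := Matrix.linftyOpSemiNormedRing
  letI : NormedRing (Matrix (Fin m) (Fin m) ℝ) := Matrix.linftyOpNormedRing
  letI : NormedAlgebra ℝ (Matrix (Fin m) (Fin m) ℝ) := Matrix.linftyOpNormedAlgebra
  have hexp := hasDerivAt_exp_smul_const (𝕂 := ℝ) A t
  have hL := (LinearMap.toContinuousLinearMap (entryFunctional v u)).hasFDerivAt
    (x := NormedSpace.exp (t • A))
  have h := hL.comp_hasDerivAt t hexp
  rw [Matrix.mulVec_mulVec]
  exact h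

lemma exp_entry_continuous {m : ℕ} (A : Matrix (Fin m) (Fin m) ℝ) (i j : Fin m) :
    Continuous fun t : ℝ => (NormedSpace.exp (t • A)) i j := by
  letI : SeminormedRing (Matrix (Fin m) (Fin m) ℝ) := Matrix.linftyOpSemiNormedRing
  letI : NormedRing (Matrix (Fin m) (Fin m) ℝ) := Matrix.linftyOpNormedRing
  letI : NormedAlgebra ℝ (Matrix (Fin m) (Fin m) ℝ) := Matrix.linftyOpNormedAlgebra
  have h1 : Continuous fun t : ℝ => NormedSpace.exp (t • A) :=
    continuous_iff_continuousAt.2 fun t => (hasDerivAt_exp_smul_const (𝕂 := ℝ) A t).continuousAt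
  have h2 : Continuous fun M : Matrix (Fin m) (Fin m) ℝ => M i j := by
    have := LinearMap.continuous_of_finiteDimensional
      (𝕜 := ℝ) (f := (LinearMap.proj j).comp (LinearMap.proj (R := ℝ)
        (φ := fun _ : Fin m => Fin m → ℝ) i))
    exact this
  exact h2.comp h1

lemma dot_exp_tendsto {m : ℕ} (A : Matrix (Fin m) (Fin m) ℝ) (v u : Fin m → ℝ)
    (hdecay : ∀ i j, Tendsto (fun t : ℝ => (NormedSpace.exp (t • A)) i j) atTop (nhds 0)) :
    Tendsto (fun t : ℝ => v ⬝ᵥ ((NormedSpace.exp (t • A)) *ᵥ u)) atTop (nhds 0) := by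
  simp only [dotProduct, Matrix.mulVec]
  have := tendsto_finset_sum (Finset.univ (α := Fin m)) (fun i _ =>
    tendsto_finset_sum (Finset.univ (α := Fin m)) (fun j _ =>
      ((hdecay i j).mul_const (u j)).const_mul (v i)))
  simpa [Finset.mul_sum] using this

lemma key_integral {m p : ℕ} (A : Matrix (Fin m) (Fin m) ℝ) (D : Matrix (Fin m) (Fin p) ℝ)
    (α : Fin m → ℝ) (hα : ∀ i, 0 ≤ α i)
    (hdecay : ∀ i j, Tendsto (fun t : ℝ => (NormedSpace.exp (t • A)) i j) atTop (nhds 0))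
    (hnn : ∀ t : ℝ, 0 ≤ t → ∀ i j, 0 ≤ (NormedSpace.exp (t • A)) i j)
    (hDnn : ∀ i j, 0 ≤ D i j)
    (hD : D *ᵥ (fun _ => (1:ℝ)) = -(A *ᵥ (fun _ => (1:ℝ)))) :
    ∫⁻ t in Set.Ioi (0:ℝ),
        ENNReal.ofReal ((α ᵥ* (NormedSpace.exp (t • A) * D)) ⬝ᵥ (fun _ => (1:ℝ)))
      = ENNReal.ofReal (α ⬝ᵥ (fun _ => (1:ℝ))) := by
  set u : Fin m → ℝ := D *ᵥ (fun _ => (1:ℝ)) with hu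
  have huequiv : ∀ t : ℝ,
      (α ᵥ* (NormedSpace.exp (t • A) * D)) ⬝ᵥ (fun _ => (1:ℝ))
        = α ⬝ᵥ ((NormedSpace.exp (t • A)) *ᵥ u) := by
    intro t
    rw [← Matrix.dotProduct_mulVec, ← Matrix.mulVec_mulVec]
  have hunn : ∀ i, 0 ≤ u i := by
    intro i
    simp only [hu, Matrix.mulVec, dotProduct]
    exact Finset.sum_nonneg fun j _ => by simpa using hDnn i j
  have hgnn : ∀ t : ℝ, 0 ≤ t → 0 ≤ α ⬝ᵥ ((NormedSpace.exp (t • A)) *ᵥ u) := by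
    intro t ht
    simp only [dotProduct, Matrix.mulVec]
    refine Finset.sum_nonneg fun i _ => mul_nonneg (hα i) ?_
    exact Finset.sum_nonneg fun j _ => mul_nonneg (hnn t ht i j) (hunn j)
  have hderiv : ∀ t : ℝ, HasDerivAt
      (fun s : ℝ => -(α ⬝ᵥ ((NormedSpace.exp (s • A)) *ᵥ (fun _ => (1:ℝ)))))
      (α ⬝ᵥ ((NormedSpace.exp (t • A)) *ᵥ u)) t := by
    intro t
    have h := (hasDerivAt_dot_exp A α (fun _ => (1:ℝ)) t).neg
    have h1 : A *ᵥ (fun _ => (1:ℝ)) = -u := by rw [hD]; simp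
    rw [h1] at h
    rw [Matrix.mulVec_neg, dotProduct_neg, neg_neg] at h
    exact h
  have htend : Tendsto
      (fun t : ℝ => -(α ⬝ᵥ ((NormedSpace.exp (t • A)) *ᵥ (fun _ => (1:ℝ)))))
      atTop (nhds 0) := by
    simpa using (dot_exp_tendsto A α (fun _ => (1:ℝ)) hdecay).neg
  have hval := integral_Ioi_of_hasDerivAt_of_nonneg' (a := 0)
    (fun t _ => hderiv t) (fun t ht => hgnn t (le_of_lt ht)) htend
  have hint := integrableOn_Ioi_deriv_of_nonneg' (a := 0)
    (fun t _ => hderiv t) (fun t ht => hgnn t (le_of_lt ht)) htend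
  have hval' : (∫ t in Set.Ioi (0:ℝ), α ⬝ᵥ ((NormedSpace.exp (t • A)) *ᵥ u))
      = α ⬝ᵥ (fun _ => (1:ℝ)) := by
    rw [hval]
    simp [NormedSpace.exp_zero]
  calc ∫⁻ t in Set.Ioi (0:ℝ),
        ENNReal.ofReal ((α ᵥ* (NormedSpace.exp (t • A) * D)) ⬝ᵥ (fun _ => (1:ℝ)))
      = ∫⁻ t in Set.Ioi (0:ℝ), ENNReal.ofReal (α ⬝ᵥ ((NormedSpace.exp (t • A)) *ᵥ u)) := by
        simp_rw [huequiv]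
    _ = ENNReal.ofReal (α ⬝ᵥ (fun _ => (1:ℝ))) := by
        rw [← ofReal_integral_eq_lintegral_ofReal hint
          (ae_restrict_of_forall_mem measurableSet_Ioi fun t ht => hgnn t (le_of_lt ht)), hval']

lemma chainRow_zero {n : ℕ} (d : Fin (n + 1) → ℕ)
    (M : (k : Fin n) → Matrix (Fin (d k.castSucc)) (Fin (d k.succ)) ℝ)
    (v0 : Fin (d 0) → ℝ) : chainRow d M v0 0 = v0 := rfl

lemma chainRow_succ {n : ℕ} (d : Fin (n + 1) → ℕ)
    (M : (k : Fin n) → Matrix (Fin (d k.castSucc)) (Fin (d k.succ)) ℝ)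
    (v0 : Fin (d 0) → ℝ) (k : Fin n) :
    chainRow d M v0 k.succ = (chainRow d M v0 k.castSucc) ᵥ* M k := by
  simp [chainRow]

lemma chainRow_shift {n : ℕ} (d : Fin (n + 2) → ℕ)
    (M : (k : Fin (n + 1)) → Matrix (Fin (d k.castSucc)) (Fin (d k.succ)) ℝ)
    (v0 : Fin (d 0) → ℝ) (j : Fin (n + 1)) :
    chainRow d M v0 j.succ
      = chainRow (fun k => d k.succ) (fun k => M k.succ) (v0 ᵥ* M 0) j := by
  induction j using Fin.induction with
  | zero => exact chainRow_succ d M v0 0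
  | succ j ih =>
      rw [chainRow_succ]
      have h1 : chainRow d M v0 j.succ.castSucc
          = chainRow (fun k => d k.succ) (fun k => M k.succ) (v0 ᵥ* M 0) j.castSucc := ih
      rw [h1]
      exact (chainRow_succ (fun k => d k.succ) (fun k => M k.succ) (v0 ᵥ* M 0) j).symm

lemma chainRow_nonneg {n : ℕ} (d : Fin (n + 1) → ℕ)
    (M : (k : Fin n) → Matrix (Fin (d k.castSucc)) (Fin (d k.succ)) ℝ)
    (v0 : Fin (d 0) → ℝ) (hv0 : ∀ i, 0 ≤ v0 i)
    (hM : ∀ k i j, 0 ≤ M k i j) (k : Fin (n + 1)) : ∀ i, 0 ≤ chainRow d M v0 k i := by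
  induction k using Fin.induction with
  | zero => exact hv0
  | succ k ih =>
      intro i
      simp only [chainRow_succ, Matrix.vecMul, dotProduct]
      exact Finset.sum_nonneg fun j _ => mul_nonneg (ih j) (hM k j i)

lemma chainRow_continuous {n : ℕ} (d : Fin (n + 1) → ℕ) {ι : Type*} [TopologicalSpace ι]
    (M : ι → (k : Fin n) → Matrix (Fin (d k.castSucc)) (Fin (d k.succ)) ℝ)
    (hM : ∀ k i j, Continuous fun y => M y k i j)
    (v0 : Fin (d 0) → ℝ) (k : Fin (n + 1)) :
    ∀ i, Continuous fun y => chainRow d (M y) v0 k i := by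
  induction k using Fin.induction with
  | zero => exact fun i => continuous_const
  | succ k ih =>
      intro i
      simp only [chainRow_succ, Matrix.vecMul, dotProduct]
      exact continuous_finset_sum _ fun j _ => (ih j).mul (hM k j i)

lemma setLIntegral_mequiv {α β : Type*} [MeasurableSpace α] [MeasurableSpace β]
    {μ : Measure α} {ν : Measure β} (e : α ≃ᵐ β) (h : MeasurePreserving e μ ν)
    (f : β → ENNReal) (s : Set β) (hs : MeasurableSet s) :
    ∫⁻ x in s, f x ∂ν = ∫⁻ y in e ⁻¹' s, f (e y) ∂μ := by
  rw [← h.map_eq, Measure.restrict_map e.measurable hs, lintegral_map_equiv]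

lemma F_continuous {n : ℕ} (d : Fin (n + 2) → ℕ)
    (A : (k : Fin (n + 1)) → Matrix (Fin (d k.castSucc)) (Fin (d k.castSucc)) ℝ)
    (D : (k : Fin (n + 1)) → Matrix (Fin (d k.castSucc)) (Fin (d k.succ)) ℝ)
    (α : Fin (d 0) → ℝ) :
    Continuous fun y : Fin (n + 1) → ℝ =>
      (chainRow d (fun k => NormedSpace.exp (y k • A k) * D k) α (Fin.last (n + 1))) ⬝ᵥ
        (fun _ => (1:ℝ)) := by
  have hM : ∀ (k : Fin (n + 1)) i j, Continuous fun y : Fin (n + 1) → ℝ =>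
      (NormedSpace.exp (y k • A k) * D k) i j := by
    intro k i j
    simp only [Matrix.mul_apply]
    exact continuous_finset_sum _ fun l _ =>
      ((exp_entry_continuous (A k) i l).comp (continuous_apply k)).mul continuous_const
  have hc := chainRow_continuous (n := n + 1) (ι := Fin (n + 1) → ℝ) d
    (fun y k => NormedSpace.exp (y k • A k) * D k) hM α (Fin.last (n + 1))
  simp only [dotProduct]
  exact continuous_finset_sum _ fun i _ => (hc i).mul continuous_const

lemma chainRow_last_one (d : Fin 2 → ℕ)
    (M : (k : Fin 1) → Matrix (Fin (d k.castSucc)) (Fin (d k.succ)) ℝ)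
    (v0 : Fin (d 0) → ℝ) : chainRow d M v0 (Fin.last 1) = v0 ᵥ* M 0 :=
  chainRow_succ d M v0 0

lemma main_lint : ∀ (n : ℕ) (d : Fin (n + 2) → ℕ)
    (A : (k : Fin (n + 1)) → Matrix (Fin (d k.castSucc)) (Fin (d k.castSucc)) ℝ)
    (D : (k : Fin (n + 1)) → Matrix (Fin (d k.castSucc)) (Fin (d k.succ)) ℝ)
    (α : Fin (d 0) → ℝ), (∀ i, 0 ≤ α i) →
    (∀ k i j, Tendsto (fun t : ℝ => (NormedSpace.exp (t • A k)) i j) atTop (nhds 0)) →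
    (∀ k (t : ℝ), 0 ≤ t → ∀ i j, 0 ≤ (NormedSpace.exp (t • A k)) i j) →
    (∀ k i j, 0 ≤ D k i j) →
    (∀ k, D k *ᵥ (fun _ => (1:ℝ)) = -(A k *ᵥ (fun _ => (1:ℝ)))) →
    (∫⁻ y in Set.univ.pi (fun _ : Fin (n + 1) => Set.Ioi (0:ℝ)),
        ENNReal.ofReal ((chainRow d (fun k => NormedSpace.exp (y k • A k) * D k) α
          (Fin.last (n + 1))) ⬝ᵥ (fun _ => (1:ℝ))))
      = ENNReal.ofReal (α ⬝ᵥ (fun _ => (1:ℝ))) := by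
  intro n
  induction n with
  | zero =>
    intro d A D α hα hdecay hnn hDnn hD
    have hmp := (volume_preserving_funUnique (Fin 1) ℝ).symm
    show (∫⁻ y in Set.univ.pi (fun _ : Fin 1 => Set.Ioi (0:ℝ)), _) = _
    refine (setLIntegral_mequiv _ hmp _ (Set.univ.pi fun _ : Fin 1 => Set.Ioi (0:ℝ))
      (MeasurableSet.univ_pi fun _ => measurableSet_Ioi)).trans ?_
    have hpre : (MeasurableEquiv.funUnique (Fin 1) ℝ).symm ⁻¹'
        (Set.univ.pi fun _ : Fin 1 => Set.Ioi (0:ℝ)) = Set.Ioi (0:ℝ) := by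
      ext t
      simp [MeasurableEquiv.funUnique, Equiv.funUnique]
    rw [hpre]
    calc (∫⁻ t in Set.Ioi (0:ℝ), ENNReal.ofReal ((chainRow d
          (fun k => NormedSpace.exp
            (((MeasurableEquiv.funUnique (Fin 1) ℝ).symm t) k • A k) * D k) α
          (Fin.last 1)) ⬝ᵥ (fun _ => (1:ℝ))))
        = ∫⁻ t in Set.Ioi (0:ℝ),
            ENNReal.ofReal ((α ᵥ* (NormedSpace.exp (t • A 0) * D 0)) ⬝ᵥ (fun _ => (1:ℝ))) := by
          refine lintegral_congr fun t => ?_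
          rw [chainRow_last_one]
          rfl
      _ = ENNReal.ofReal (α ⬝ᵥ (fun _ => (1:ℝ))) :=
          key_integral (A 0) (D 0) α hα (hdecay 0) (hnn 0) (hDnn 0) (hD 0)
  | succ n IH =>
    intro d A D α hα hdecay hnn hDnn hD
    set e := MeasurableEquiv.piFinSuccAbove (fun _ : Fin (n + 2) => ℝ) 0 with he
    have hmp : MeasurePreserving e.symm :=
      (volume_preserving_piFinSuccAbove (fun _ : Fin (n + 2) => ℝ) 0).symm
    have hcons : ∀ z : ℝ × (Fin (n + 1) → ℝ), (e.symm z : Fin (n + 2) → ℝ) = Fin.cons z.1 z.2 := by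
      intro z
      simp only [he, MeasurableEquiv.piFinSuccAbove, MeasurableEquiv.symm, MeasurableEquiv.coe_mk,
        Equiv.symm_symm, Fin.insertNthEquiv, Equiv.coe_fn_mk, Fin.insertNth_zero']
    have hpre : e.symm ⁻¹' (Set.univ.pi fun _ : Fin (n + 2) => Set.Ioi (0:ℝ))
        = Set.Ioi (0:ℝ) ×ˢ (Set.univ.pi fun _ : Fin (n + 1) => Set.Ioi (0:ℝ)) := by
      ext z
      simp only [Set.mem_preimage, hcons z, Set.mem_pi, Set.mem_univ, forall_true_left,
        Set.mem_prod]
      constructor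
      · intro h
        exact ⟨by simpa using h 0, fun j => by simpa using h j.succ⟩
      · intro h i
        rcases Fin.eq_zero_or_eq_succ i with rfl | ⟨j, rfl⟩
        · simpa using h.1
        · simpa using h.2 j
    rw [setLIntegral_mequiv e.symm hmp _ _ (MeasurableSet.univ_pi fun _ => measurableSet_Ioi),
      hpre]
    have hFc := F_continuous d A D α
    have hmeas : Measurable fun z : ℝ × (Fin (n + 1) → ℝ) =>
        ENNReal.ofReal ((chainRow d
          (fun k => NormedSpace.exp ((e.symm z : Fin (n + 2) → ℝ) k • A k) * D k) α
          (Fin.last (n + 2))) ⬝ᵥ (fun _ => (1:ℝ))) :=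
      ENNReal.measurable_ofReal.comp ((hFc.measurable).comp e.symm.measurable)
    rw [Measure.volume_eq_prod, ← Measure.prod_restrict, lintegral_prod _ hmeas.aemeasurable]
    have hchain : ∀ (t : ℝ) (y' : Fin (n + 1) → ℝ),
        (chainRow d (fun k => NormedSpace.exp ((e.symm (t, y') : Fin (n + 2) → ℝ) k • A k) * D k)
            α (Fin.last (n + 2)))
          = chainRow (fun k => d k.succ)
              (fun k => NormedSpace.exp (y' k • A k.succ) * D k.succ)
              (α ᵥ* (NormedSpace.exp (t • A 0) * D 0)) (Fin.last (n + 1)) := by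
      intro t y'
      calc chainRow d
              (fun k => NormedSpace.exp ((e.symm (t, y') : Fin (n + 2) → ℝ) k • A k) * D k) α
              (Fin.last (n + 2))
          = chainRow (fun k => d k.succ)
              (fun k => NormedSpace.exp
                ((e.symm (t, y') : Fin (n + 2) → ℝ) k.succ • A k.succ) * D k.succ)
              (α ᵥ* (NormedSpace.exp ((e.symm (t, y') : Fin (n + 2) → ℝ) 0 • A 0) * D 0))
              (Fin.last (n + 1)) :=
            chainRow_shift d _ α (Fin.last (n + 1))
        _ = chainRow (fun k => d k.succ)
              (fun k => NormedSpace.exp (y' k • A k.succ) * D k.succ)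
              (α ᵥ* (NormedSpace.exp (t • A 0) * D 0)) (Fin.last (n + 1)) := by
            simp only [hcons (t, y'), Fin.cons_succ, Fin.cons_zero]
    have hinner : ∀ t ∈ Set.Ioi (0:ℝ),
        (∫⁻ y' in Set.univ.pi (fun _ : Fin (n + 1) => Set.Ioi (0:ℝ)),
          ENNReal.ofReal ((chainRow d
            (fun k => NormedSpace.exp ((e.symm (t, y') : Fin (n + 2) → ℝ) k • A k) * D k) α
            (Fin.last (n + 2))) ⬝ᵥ (fun _ => (1:ℝ))))
          = ENNReal.ofReal ((α ᵥ* (NormedSpace.exp (t • A 0) * D 0)) ⬝ᵥ (fun _ => (1:ℝ))) := by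
      intro t ht
      have ht' : (0:ℝ) ≤ t := le_of_lt ht
      have hα' : ∀ i, 0 ≤ (α ᵥ* (NormedSpace.exp (t • A 0) * D 0)) i := by
        intro i
        simp only [Matrix.vecMul, dotProduct, Matrix.mul_apply]
        refine Finset.sum_nonneg fun j _ => mul_nonneg (hα j) ?_
        exact le_of_le_of_eq (Finset.sum_nonneg fun l _ => mul_nonneg (hnn 0 t ht' j l) (hDnn 0 l i))
          (Matrix.mul_apply).symm
      calc (∫⁻ y' in Set.univ.pi (fun _ : Fin (n + 1) => Set.Ioi (0:ℝ)),
            ENNReal.ofReal ((chainRow d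
              (fun k => NormedSpace.exp ((e.symm (t, y') : Fin (n + 2) → ℝ) k • A k) * D k) α
              (Fin.last (n + 2))) ⬝ᵥ (fun _ => (1:ℝ))))
          = ∫⁻ y' in Set.univ.pi (fun _ : Fin (n + 1) => Set.Ioi (0:ℝ)),
              ENNReal.ofReal ((chainRow (fun k => d k.succ)
                (fun k => NormedSpace.exp (y' k • A k.succ) * D k.succ)
                (α ᵥ* (NormedSpace.exp (t • A 0) * D 0)) (Fin.last (n + 1))) ⬝ᵥ
                  (fun _ => (1:ℝ))) := by
            refine lintegral_congr fun y' => ?_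
            rw [hchain t y']
            rfl
        _ = ENNReal.ofReal ((α ᵥ* (NormedSpace.exp (t • A 0) * D 0)) ⬝ᵥ (fun _ => (1:ℝ))) :=
            IH (fun k => d k.succ) (fun k => A k.succ) (fun k => D k.succ)
              (α ᵥ* (NormedSpace.exp (t • A 0) * D 0)) hα'
              (fun k => hdecay k.succ) (fun k => hnn k.succ) (fun k => hDnn k.succ)
              (fun k => hD k.succ)
    calc (∫⁻ t in Set.Ioi (0:ℝ), ∫⁻ y' in Set.univ.pi (fun _ : Fin (n + 1) => Set.Ioi (0:ℝ)),
          ENNReal.ofReal ((chainRow d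
            (fun k => NormedSpace.exp ((e.symm (t, y') : Fin (n + 2) → ℝ) k • A k) * D k) α
            (Fin.last (n + 2))) ⬝ᵥ (fun _ => (1:ℝ))))
        = ∫⁻ t in Set.Ioi (0:ℝ),
            ENNReal.ofReal ((α ᵥ* (NormedSpace.exp (t • A 0) * D 0)) ⬝ᵥ (fun _ => (1:ℝ))) :=
          setLIntegral_congr_fun measurableSet_Ioi hinner
      _ = ENNReal.ofReal (α ⬝ᵥ (fun _ => (1:ℝ))) :=
          key_integral (A 0) (D 0) α hα (hdecay 0) (hnn 0) (hDnn 0) (hD 0)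

/-- The sequential multivariate phase-type density
`f(y₁,…,yₙ) = α exp(A₁y₁) D₁ exp(A₂y₂) D₂ ⋯ exp(Aₙyₙ) Dₙ 𝟏`
(sizes of the blocks may differ) integrates to 1 over `[0,∞)ⁿ`, provided each `Aₖ` is
invertible with `exp(Aₖ t) → 0` entrywise and entrywise nonnegative for `t ≥ 0`, each `Dₖ` is
entrywise nonnegative with `Dₖ𝟏 = −Aₖ𝟏`, and `α` is a probability row vector. -/
theorem stmt_2 (n : ℕ) (d : Fin (n + 2) → ℕ)
    (A : (k : Fin (n + 1)) → Matrix (Fin (d k.castSucc)) (Fin (d k.castSucc)) ℝ)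
    (D : (k : Fin (n + 1)) → Matrix (Fin (d k.castSucc)) (Fin (d k.succ)) ℝ)
    (α : Fin (d 0) → ℝ)
    (hα : ∀ i, 0 ≤ α i) (hα1 : α ⬝ᵥ (fun _ => (1 : ℝ)) = 1)
    (hAinv : ∀ k, IsUnit (A k).det)
    (hAdecay : ∀ k, ∀ i j, Tendsto (fun t : ℝ => (NormedSpace.exp (t • A k)) i j) atTop (nhds 0))
    (hAnn : ∀ k, ∀ t : ℝ, 0 ≤ t → ∀ i j, 0 ≤ (NormedSpace.exp (t • A k)) i j)
    (hDnn : ∀ k, ∀ i j, 0 ≤ D k i j)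
    (hD : ∀ k, D k *ᵥ (fun _ => (1 : ℝ)) = -(A k *ᵥ (fun _ => (1 : ℝ)))) :
    (∫ y in Set.univ.pi (fun _ : Fin (n + 1) => Set.Ioi (0 : ℝ)),
        (chainRow d (fun k => NormedSpace.exp (y k • A k) * D k) α (Fin.last (n + 1))) ⬝ᵥ
          (fun _ => (1 : ℝ))) = 1 := by
  have hS : MeasurableSet (Set.univ.pi fun _ : Fin (n + 1) => Set.Ioi (0:ℝ)) :=
    MeasurableSet.univ_pi fun _ => measurableSet_Ioi
  have hnonneg : ∀ y ∈ Set.univ.pi (fun _ : Fin (n + 1) => Set.Ioi (0:ℝ)),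
      0 ≤ (chainRow d (fun k => NormedSpace.exp (y k • A k) * D k) α (Fin.last (n + 1))) ⬝ᵥ
        (fun _ => (1:ℝ)) := by
    intro y hy
    have hM : ∀ (k : Fin (n + 1)) i j, 0 ≤ (NormedSpace.exp (y k • A k) * D k) i j := by
      intro k i j
      rw [Matrix.mul_apply]
      refine Finset.sum_nonneg fun l _ => mul_nonneg ?_ (hDnn k l j)
      exact hAnn k (y k) (le_of_lt (hy k (Set.mem_univ k))) i l
    have := chainRow_nonneg d (fun k => NormedSpace.exp (y k • A k) * D k) α hα hM
      (Fin.last (n + 1))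
    exact Finset.sum_nonneg fun i _ => by simpa using this i
  rw [integral_eq_lintegral_of_nonneg_ae (ae_restrict_of_forall_mem hS hnonneg)
    ((F_continuous d A D α).aestronglyMeasurable.restrict)]
  rw [main_lint n d A D α hα hAdecay hAnn hDnn hD, hα1]
  simp
end

section
/- Let Ψ(h), h ≥ 0, be square matrices satisfying Ψ(0) = (λ/(λ+θ))(I − (c/(λ+θ))A)^{−1} and for h ≥ 1, Ψ(h) = ((c/(λ+θ)) Σ_{v=0}^{h−1} Ψ(v) D Ψ(h−v−1)) (I − (c/(λ+θ))A)^{−1}, where λ, c > 0, θ ≥ 0, and I − (c/(λ+θ))A is invertible. If the series Ψ̂ = Σ_{h=0}^∞ Ψ(h) converges absolutely, then Ψ̂ satisfies the Riccati equation (λ/c) I + Ψ̂(A − ((λ+θ)/c) I) + Ψ̂ D Ψ̂ = 0. -/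
open Matrix

section

attribute [local instance] Matrix.linftyOpNormedRing Matrix.linftyOpNormedAlgebra
  Matrix.linftyOpNormedAddCommGroup Matrix.linftyOpNormedSpace

variable {m : ℕ}

private lemma entry_norm_le (i j : Fin m) (X : Matrix (Fin m) (Fin m) ℝ) :
    ‖X i j‖ ≤ ‖X‖ := by
  have h1 : ‖X i j‖₊ ≤ ∑ k : Fin m, ‖X i k‖₊ :=
    Finset.single_le_sum (f := fun k => ‖X i k‖₊) (fun k _ => zero_le) (Finset.mem_univ j)
  have h2 : (∑ k : Fin m, ‖X i k‖₊) ≤ (Finset.univ : Finset (Fin m)).sup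
      fun i : Fin m => ∑ k : Fin m, ‖X i k‖₊ :=
    Finset.le_sup (f := fun i : Fin m => ∑ k : Fin m, ‖X i k‖₊) (Finset.mem_univ i)
  have := h1.trans h2
  rw [Matrix.linfty_opNorm_def]
  exact_mod_cast this

/-- Entry evaluation as a continuous linear map (w.r.t. the linfty operator norm). -/
private noncomputable def entryCLM (i j : Fin m) : Matrix (Fin m) (Fin m) ℝ →L[ℝ] ℝ :=
  LinearMap.mkContinuous
    { toFun := fun X => X i j
      map_add' := fun X Y => rfl
      map_smul' := fun r X => rfl } 1
    (by
      intro X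
      show ‖X i j‖ ≤ 1 * ‖X‖
      simpa using entry_norm_le i j X)

/-- Riccati equation for the summed first-passage blocks: if `Ψ(0) = (λ/(λ+θ))(I − (c/(λ+θ))A)^{−1}`
and `Ψ(h) = ((c/(λ+θ)) Σ_{v=0}^{h−1} Ψ(v) D Ψ(h−v−1)) (I − (c/(λ+θ))A)^{−1}` for `h ≥ 1`,
and the series `Ψ̂ = Σ_h Ψ(h)` converges absolutely (entrywise), then
`(λ/c) I + Ψ̂ (A − ((λ+θ)/c) I) + Ψ̂ D Ψ̂ = 0`. -/
theorem stmt_13 (m : ℕ) (A D : Matrix (Fin m) (Fin m) ℝ)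
    (lam c θ : ℝ) (hlam : 0 < lam) (hc : 0 < c) (hθ : 0 ≤ θ)
    (hinv : IsUnit ((1 : Matrix (Fin m) (Fin m) ℝ) - (c / (lam + θ)) • A).det)
    (Ψ : ℕ → Matrix (Fin m) (Fin m) ℝ)
    (hΨ0 : Ψ 0 = (lam / (lam + θ)) • ((1 : Matrix (Fin m) (Fin m) ℝ) - (c / (lam + θ)) • A)⁻¹)
    (hΨrec : ∀ h : ℕ,
      Ψ (h + 1) =
        ((c / (lam + θ)) • ∑ v ∈ Finset.range (h + 1), Ψ v * D * Ψ (h - v)) *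
          ((1 : Matrix (Fin m) (Fin m) ℝ) - (c / (lam + θ)) • A)⁻¹)
    (habs : ∀ i j, Summable (fun h => |Ψ h i j|))
    (Ψhat : Matrix (Fin m) (Fin m) ℝ)
    (hΨhat : ∀ i j, Ψhat i j = ∑' h : ℕ, Ψ h i j) :
    (lam / c) • (1 : Matrix (Fin m) (Fin m) ℝ) +
      Ψhat * (A - ((lam + θ) / c) • (1 : Matrix (Fin m) (Fin m) ℝ)) +
      Ψhat * D * Ψhat = 0 := by
  have hs : (0:ℝ) < lam + θ := by linarith
  set M : Matrix (Fin m) (Fin m) ℝ := (1 : Matrix (Fin m) (Fin m) ℝ) - (c / (lam + θ)) • A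
    with hM
  have hMinv : M⁻¹ * M = 1 := Matrix.nonsing_inv_mul _ hinv
  -- norm summability
  have hnorm : Summable (fun h => ‖Ψ h‖) := by
    have hb : Summable (fun h => ∑ i : Fin m, ∑ j : Fin m, |Ψ h i j|) := by
      apply summable_sum
      intro i _
      exact summable_sum (fun j _ => habs i j)
    refine Summable.of_nonneg_of_le (fun h => norm_nonneg _) (fun h => ?_) hb
    rw [Matrix.linfty_opNorm_def]
    have : ((Finset.univ : Finset (Fin m)).sup fun i : Fin m => ∑ j : Fin m, ‖Ψ h i j‖₊ : NNReal)
        ≤ ∑ i : Fin m, ∑ j : Fin m, ‖Ψ h i j‖₊ := by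
      apply Finset.sup_le
      intro i _
      exact Finset.single_le_sum (f := fun i => ∑ j : Fin m, ‖Ψ h i j‖₊)
        (fun k _ => zero_le) (Finset.mem_univ i)
    have h2 : (((Finset.univ : Finset (Fin m)).sup
        fun i : Fin m => ∑ j : Fin m, ‖Ψ h i j‖₊ : NNReal) : ℝ)
        ≤ ((∑ i : Fin m, ∑ j : Fin m, ‖Ψ h i j‖₊ : NNReal) : ℝ) := by exact_mod_cast this
    refine le_trans h2 (le_of_eq ?_)
    push_cast
    simp [Real.norm_eq_abs]
  have hSum : Summable Ψ := hnorm.of_norm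
  -- Ψhat is the sum
  have hhat : HasSum Ψ Ψhat := by
    have h1 := hSum.hasSum
    have h2 : ∀ i j, HasSum (fun h => Ψ h i j) ((∑' h, Ψ h) i j) := by
      intro i j
      have := (entryCLM i j).hasSum h1
      exact this
    have : Ψhat = ∑' h, Ψ h := by
      ext i j
      rw [hΨhat i j, (h2 i j).tsum_eq]
    rw [this]
    exact h1
  have htsum : (∑' h, Ψ h) = Ψhat := hhat.tsum_eq
  -- basic identities
  have e0 : Ψ 0 * M = (lam / (lam + θ)) • (1 : Matrix (Fin m) (Fin m) ℝ) := by
    rw [hΨ0, smul_mul_assoc, hMinv]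
  have e1 : ∀ h, Ψ (h + 1) * M
      = (c / (lam + θ)) • ∑ v ∈ Finset.range (h + 1), Ψ v * D * Ψ (h - v) := by
    intro h
    rw [hΨrec h, mul_assoc, hMinv, mul_one]
  -- Cauchy product
  have hnormD : Summable (fun h => ‖Ψ h * D‖) := by
    refine Summable.of_nonneg_of_le (fun h => norm_nonneg _) (fun h => ?_)
      (hnorm.mul_right ‖D‖)
    exact norm_mul_le _ _
  have cauchy : (∑' h, Ψ h * D) * (∑' h, Ψ h)
      = ∑' h, ∑ v ∈ Finset.range (h + 1), (Ψ v * D) * Ψ (h - v) :=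
    tsum_mul_tsum_eq_tsum_sum_range_of_summable_norm hnormD hnorm
  have hDsum : (∑' h, Ψ h * D) = Ψhat * D := by
    rw [hSum.tsum_mul_right, htsum]
  have cauchy' : (∑' h, ∑ v ∈ Finset.range (h + 1), Ψ v * D * Ψ (h - v))
      = Ψhat * D * Ψhat := by
    rw [← cauchy, hDsum, htsum]
  -- summability of the convolution series
  have hconv : Summable (fun h => ∑ v ∈ Finset.range (h + 1), Ψ v * D * Ψ (h - v)) := by
    have := summable_norm_sum_mul_range_of_summable_norm hnormD hnorm
    exact this.of_norm
  -- main identity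
  have key : Ψhat * M = (lam / (lam + θ)) • (1 : Matrix (Fin m) (Fin m) ℝ)
      + (c / (lam + θ)) • (Ψhat * D * Ψhat) := by
    have h1 : Ψhat * M = ∑' h, Ψ h * M := by
      rw [hSum.tsum_mul_right, htsum]
    rw [h1, Summable.tsum_eq_zero_add (hSum.mul_right M), e0]
    congr 1
    have : ∀ h : ℕ, Ψ (h + 1) * M
        = (c / (lam + θ)) • ∑ v ∈ Finset.range (h + 1), Ψ v * D * Ψ (h - v) := e1
    rw [tsum_congr this, Summable.tsum_const_smul _ hconv, cauchy']
  -- final algebra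
  have hsne : (lam + θ) ≠ 0 := ne_of_gt hs
  have hcne : c ≠ 0 := ne_of_gt hc
  have key2 : ((lam + θ) / c) • Ψhat - Ψhat * A
      = (lam / c) • (1 : Matrix (Fin m) (Fin m) ℝ) + Ψhat * D * Ψhat := by
    have := congrArg (fun X => ((lam + θ) / c) • X) key
    simp only [hM, mul_sub, mul_one, Matrix.mul_smul, smul_add, smul_sub, smul_smul] at this
    have hc1 : (lam + θ) / c * (c / (lam + θ)) = 1 := by
      field_simp
    have hc2 : (lam + θ) / c * (lam / (lam + θ)) = lam / c := by
      field_simp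
    rw [hc1, hc2] at this
    simp only [one_smul] at this
    exact this
  have expand : Ψhat * (A - ((lam + θ) / c) • (1 : Matrix (Fin m) (Fin m) ℝ))
      = Ψhat * A - ((lam + θ) / c) • Ψhat := by
    rw [mul_sub, Matrix.mul_smul, mul_one]
  rw [expand]
  have : (lam / c) • (1 : Matrix (Fin m) (Fin m) ℝ)
      + (Ψhat * A - ((lam + θ) / c) • Ψhat) + Ψhat * D * Ψhat
      = ((lam / c) • (1 : Matrix (Fin m) (Fin m) ℝ) + Ψhat * D * Ψhat)
        - (((lam + θ) / c) • Ψhat - Ψhat * A) := by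
    abel
  rw [this, ← key2, sub_self]

end
end

section
/- Let Y₁ have density f₁(y) = α exp(A₁y)(−A₁𝟏) and H₁ ~ Erlang(p,σ) with Y₁ ≤_st H₁ assumed for every phase-type density with sub-generator A₁ of the given family, and similarly all conditional second-coordinate densities y₂ ↦ (α exp(A₁y₁)D₁/(α exp(A₁y₁)D₁𝟏)) exp(A₂y₂)(−A₂𝟏) are dominated by the Erlang(p,σ) density in the usual stochastic order. Then the bivariate vector (Y₁,Y₂) with density f(y₁,y₂) = α exp(A₁y₁)D₁ exp(A₂y₂)D₂𝟏 is dominated in the usual multivariate stochastic order by (H₁,H₂), where H₁,H₂ are i.i.d. Erlang(p,σ): for every increasing set Γ ⊆ ℝ₊², ∫∫_Γ f(y₁,y₂) dy₁dy₂ ≤ ∫∫_Γ f_{p,σ}(y₁) f_{p,σ}(y₂) dy₁dy₂. -/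
open Matrix MeasureTheory Filter

/-- The Erlang(p,σ) density `f_{p,σ}(t) = σ^p t^{p−1} e^{−σt} / (p−1)!` on `[0,∞)`. -/
noncomputable def erlangDens (p : ℕ) (σ : ℝ) (t : ℝ) : ℝ :=
  σ ^ p * t ^ (p - 1) * Real.exp (-σ * t) / (p - 1).factorial

lemma erlang_cont (p : ℕ) (σ : ℝ) : Continuous (erlangDens p σ) := by
  unfold erlangDens; fun_prop

lemma erlang_nonneg {p : ℕ} {σ : ℝ} (hσ : 0 < σ) {t : ℝ} (ht : 0 ≤ t) :
    0 ≤ erlangDens p σ t := by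
  unfold erlangDens
  positivity

lemma erlang_integrableOn {p : ℕ} {σ : ℝ} (hσ : 0 < σ) (hp : 1 ≤ p) :
    IntegrableOn (erlangDens p σ) (Set.Ioi (0:ℝ)) := by
  have h0 : IntegrableOn (fun x : ℝ => Real.exp (-x) * x ^ ((p:ℝ) - 1)) (Set.Ioi (0:ℝ)) :=
    Real.GammaIntegral_convergent (by exact_mod_cast Nat.pos_of_ne_zero (by omega))
  have h1 : IntegrableOn (fun x : ℝ => Real.exp (-(σ * x)) * (σ * x) ^ ((p:ℝ) - 1))
      (Set.Ioi (0:ℝ)) := by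
    have := (integrableOn_Ioi_comp_mul_left_iff
      (fun x : ℝ => Real.exp (-x) * x ^ ((p:ℝ) - 1)) 0 hσ).mpr
    simpa using this (by simpa using h0)
  have h2 : IntegrableOn
      (fun x : ℝ => (σ ^ p / (p-1).factorial / σ ^ (p-1)) *
        (Real.exp (-(σ * x)) * (σ * x) ^ ((p:ℝ) - 1))) (Set.Ioi (0:ℝ)) :=
    h1.const_mul _
  apply h2.congr_fun _ measurableSet_Ioi
  intro x hx
  have hx0 : (0:ℝ) < x := hx
  have hσx : (0:ℝ) < σ * x := by positivity
  have hcast : ((p:ℝ) - 1) = ((p - 1 : ℕ) : ℝ) := by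
    rw [Nat.cast_sub hp]; norm_num
  beta_reduce
  rw [hcast, Real.rpow_natCast]
  unfold erlangDens
  rw [mul_pow]
  have hσp : σ ^ p = σ ^ (p - 1) * σ := by
    rw [← pow_succ]; congr 1; omega
  field_simp

lemma dotProduct_nonneg' {n : ℕ} {u v : Fin n → ℝ} (hu : ∀ i, 0 ≤ u i) (hv : ∀ i, 0 ≤ v i) :
    0 ≤ u ⬝ᵥ v :=
  Finset.sum_nonneg fun i _ => mul_nonneg (hu i) (hv i)

lemma vecMul_nonneg' {m n : ℕ} {u : Fin m → ℝ} {M : Matrix (Fin m) (Fin n) ℝ}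
    (hu : ∀ i, 0 ≤ u i) (hM : ∀ i j, 0 ≤ M i j) : ∀ j, 0 ≤ (u ᵥ* M) j := by
  intro j
  simp only [Matrix.vecMul, dotProduct]
  exact Finset.sum_nonneg fun i _ => mul_nonneg (hu i) (hM i j)

lemma mulVec_nonneg' {m n : ℕ} {M : Matrix (Fin m) (Fin n) ℝ} {v : Fin n → ℝ}
    (hM : ∀ i j, 0 ≤ M i j) (hv : ∀ j, 0 ≤ v j) : ∀ i, 0 ≤ (M *ᵥ v) i := by
  intro i
  simp only [Matrix.mulVec, dotProduct]
  exact Finset.sum_nonneg fun j _ => mul_nonneg (hM i j) (hv j)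

lemma matMul_nonneg' {m n k : ℕ} {M : Matrix (Fin m) (Fin n) ℝ} {N : Matrix (Fin n) (Fin k) ℝ}
    (hM : ∀ i j, 0 ≤ M i j) (hN : ∀ i j, 0 ≤ N i j) : ∀ i j, 0 ≤ (M * N) i j := by
  intro i j
  rw [Matrix.mul_apply]
  exact Finset.sum_nonneg fun l _ => mul_nonneg (hM i l) (hN l j)

lemma phDensity_continuous {n : ℕ} (A : Matrix (Fin n) (Fin n) ℝ) (α w : Fin n → ℝ) :
    Continuous (fun t : ℝ => (α ᵥ* NormedSpace.exp (t • A)) ⬝ᵥ w) := by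
  letI : SeminormedRing (Matrix (Fin n) (Fin n) ℝ) := Matrix.linftyOpSemiNormedRing
  letI : NormedRing (Matrix (Fin n) (Fin n) ℝ) := Matrix.linftyOpNormedRing
  letI : NormedAlgebra ℝ (Matrix (Fin n) (Fin n) ℝ) := Matrix.linftyOpNormedAlgebra
  letI : NormedAlgebra ℚ (Matrix (Fin n) (Fin n) ℝ) := Matrix.linftyOpNormedAlgebra
  let L : Matrix (Fin n) (Fin n) ℝ →ₗ[ℝ] ℝ :=
    { toFun := fun M => α ⬝ᵥ (M *ᵥ w)
      map_add' := by intro M N; simp [Matrix.add_mulVec, dotProduct_add]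
      map_smul' := by intro r M; simp [Matrix.smul_mulVec, dotProduct_smul] }
  have hL : Continuous L := L.continuous_of_finiteDimensional
  have h2 : Continuous (fun u : ℝ => NormedSpace.exp (u • A)) :=
    NormedSpace.exp_continuous.comp (continuous_id.smul continuous_const)
  have h3 : Continuous (fun t : ℝ => L (NormedSpace.exp (t • A))) := hL.comp h2
  convert h3 using 2 with t
  exact (dotProduct_mulVec _ _ _).symm

lemma phDensity_integrableOn {n : ℕ} (A : Matrix (Fin n) (Fin n) ℝ) (α : Fin n → ℝ)
    (hα : ∀ i, 0 ≤ α i) (hα1 : α ⬝ᵥ (fun _ => (1:ℝ)) = 1)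
    (hexp : ∀ t : ℝ, 0 ≤ t → ∀ i j, 0 ≤ NormedSpace.exp (t • A) i j)
    (hw : ∀ i, 0 ≤ (-(A *ᵥ (fun _ => (1:ℝ)))) i) :
    IntegrableOn (fun t : ℝ => (α ᵥ* NormedSpace.exp (t • A)) ⬝ᵥ (-(A *ᵥ (fun _ => (1:ℝ)))))
      (Set.Ioi (0:ℝ)) := by
  set w₁ : Fin n → ℝ := fun _ => (1:ℝ) with hw₁
  set c : ℝ → ℝ := fun t => (α ᵥ* NormedSpace.exp (t • A)) ⬝ᵥ (-(A *ᵥ w₁)) with hc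
  set S : ℝ → ℝ := fun t => α ⬝ᵥ (NormedSpace.exp (t • A) *ᵥ w₁) with hSdef
  have hc_cont : Continuous c := phDensity_continuous A α _
  have hc_nonneg : ∀ t : ℝ, 0 ≤ t → 0 ≤ c t := fun t ht =>
    dotProduct_nonneg' (vecMul_nonneg' hα (hexp t ht)) hw
  have hS_nonneg : ∀ t : ℝ, 0 ≤ t → 0 ≤ S t := fun t ht =>
    dotProduct_nonneg' hα (mulVec_nonneg' (hexp t ht) (fun _ => zero_le_one))
  have hS0 : S 0 = 1 := by
    simp only [hSdef, zero_smul, NormedSpace.exp_zero, Matrix.one_mulVec]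
    exact hα1
  have hderiv : ∀ t : ℝ, HasDerivAt (fun u => -(S u)) (c t) t := by
    intro t
    letI : SeminormedRing (Matrix (Fin n) (Fin n) ℝ) := Matrix.linftyOpSemiNormedRing
    letI : NormedRing (Matrix (Fin n) (Fin n) ℝ) := Matrix.linftyOpNormedRing
    letI : NormedAlgebra ℝ (Matrix (Fin n) (Fin n) ℝ) := Matrix.linftyOpNormedAlgebra
    let L : Matrix (Fin n) (Fin n) ℝ →ₗ[ℝ] ℝ :=
      { toFun := fun M => α ⬝ᵥ (M *ᵥ w₁)
        map_add' := by intro M N; simp [Matrix.add_mulVec, dotProduct_add]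
        map_smul' := by intro r M; simp [Matrix.smul_mulVec, dotProduct_smul] }
    have h := (hasDerivAt_exp_smul_const (𝕂 := ℝ) A t)
    have hS : HasDerivAt S (L (NormedSpace.exp (t • A) * A)) t := by
      have := ((L.toContinuousLinearMap).hasFDerivAt
        (x := NormedSpace.exp (t • A))).comp_hasDerivAt t h
      exact this
    have heq : L (NormedSpace.exp (t • A) * A) = -(c t) := by
      show α ⬝ᵥ ((NormedSpace.exp (t • A) * A) *ᵥ w₁) = _
      rw [← Matrix.mulVec_mulVec, dotProduct_mulVec, hc]
      simp [dotProduct_neg]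
    rw [heq] at hS
    have hS' := hS.neg
    rw [neg_neg] at hS'
    exact hS'
  have hint : ∀ T : ℝ, 0 ≤ T → (∫ x in (0:ℝ)..T, c x) ≤ 1 := by
    intro T hT
    have h : (∫ x in (0:ℝ)..T, c x) = (-(S T)) - (-(S 0)) :=
      intervalIntegral.integral_eq_sub_of_hasDerivAt (fun t _ => hderiv t)
        (hc_cont.intervalIntegrable 0 T)
    rw [h, hS0]
    have := hS_nonneg T hT
    linarith
  refine integrableOn_Ioi_of_intervalIntegral_norm_bounded 1 0
    (fun T : ℝ => hc_cont.integrableOn_Ioc) Filter.tendsto_id ?_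
  filter_upwards [Filter.eventually_ge_atTop (0:ℝ)] with T hT
  have h : (∫ x in (0:ℝ)..T, ‖c x‖) = ∫ x in (0:ℝ)..T, c x := by
    apply intervalIntegral.integral_congr
    intro x hx
    rw [Set.uIcc_of_le hT] at hx
    exact Real.norm_of_nonneg (hc_nonneg x hx.1)
  simpa only [id_eq, h] using hint T hT

lemma upperSection_inf_nonneg {s : Set ℝ} (hsub : s ⊆ Set.Ici 0) (hne : s.Nonempty) :
    0 ≤ sInf s :=
  le_csInf hne fun x hx => hsub hx

lemma upperSection_integral {s : Set ℝ} (hsub : s ⊆ Set.Ici 0)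
    (hup : ∀ x ∈ s, ∀ y, x ≤ y → y ∈ s) (hne : s.Nonempty) (f : ℝ → ℝ) :
    (∫ x in s, f x) = ∫ x in Set.Ioi (sInf s), f x := by
  have hbdd : BddBelow s := ⟨0, fun x hx => hsub hx⟩
  apply setIntegral_congr_set
  rw [MeasureTheory.ae_eq_set]
  constructor
  · refine measure_mono_null (fun x hx => ?_) (measure_singleton (sInf s))
    rcases hx with ⟨hxs, hxn⟩
    simp only [Set.mem_Ioi, not_lt] at hxn
    have := csInf_le hbdd hxs
    simp [le_antisymm hxn this]
  · have : Set.Ioi (sInf s) \ s = ∅ := by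
      ext x
      simp only [Set.mem_diff, Set.mem_Ioi, Set.mem_empty_iff_false, iff_false, not_and,
        not_not]
      intro hx
      obtain ⟨y, hy, hyx⟩ := (csInf_lt_iff hbdd hne).1 hx
      exact hup y hy x hyx.le
    simp [this]

lemma indicator_slice_left (Γ : Set (ℝ × ℝ)) (g : ℝ × ℝ → ℝ) (y₁ y₂ : ℝ) :
    Γ.indicator g (y₁, y₂) = {t : ℝ | (y₁, t) ∈ Γ}.indicator (fun t => g (y₁, t)) y₂ := by
  by_cases h : (y₁, y₂) ∈ Γ <;> simp [Set.indicator, h]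

lemma indicator_slice_right (Γ : Set (ℝ × ℝ)) (g : ℝ × ℝ → ℝ) (y₁ y₂ : ℝ) :
    Γ.indicator g (y₁, y₂) = {t : ℝ | (t, y₂) ∈ Γ}.indicator (fun t => g (t, y₂)) y₁ := by
  by_cases h : (y₁, y₂) ∈ Γ <;> simp [Set.indicator, h]


/-- Bivariate stochastic domination of a sequential phase-type vector by an i.i.d.
Erlang pair (Lemma 2 of the paper, case `n = 2`): if every phase-type density with
sub-generator `A₁` (resp. every conditional second-coordinate density, with
sub-generator `A₂`) is dominated by the Erlang(p,σ) density in the usual stochastic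
order, then for every increasing set `Γ ⊆ ℝ₊²`,
`∫∫_Γ f(y₁,y₂) dy₁dy₂ ≤ ∫∫_Γ f_{p,σ}(y₁) f_{p,σ}(y₂) dy₁dy₂`,
where `f(y₁,y₂) = α exp(A₁y₁) D₁ exp(A₂y₂) D₂ 𝟏`. -/
theorem stmt_17 (p₁ p₂ p₃ : ℕ)
    (A₁ : Matrix (Fin p₁) (Fin p₁) ℝ) (D₁ : Matrix (Fin p₁) (Fin p₂) ℝ)
    (A₂ : Matrix (Fin p₂) (Fin p₂) ℝ) (D₂ : Matrix (Fin p₂) (Fin p₃) ℝ)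
    (α : Fin p₁ → ℝ) (hα : ∀ i, 0 ≤ α i) (hα1 : α ⬝ᵥ (fun _ => (1 : ℝ)) = 1)
    (hexp₁ : ∀ t : ℝ, 0 ≤ t → ∀ i j, 0 ≤ (NormedSpace.exp (t • A₁)) i j)
    (hexp₂ : ∀ t : ℝ, 0 ≤ t → ∀ i j, 0 ≤ (NormedSpace.exp (t • A₂)) i j)
    (hD₁ : ∀ i j, 0 ≤ D₁ i j) (hD₂ : ∀ i j, 0 ≤ D₂ i j)
    (hD₁1 : D₁ *ᵥ (fun _ => (1 : ℝ)) = -(A₁ *ᵥ (fun _ => (1 : ℝ))))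
    (hD₂1 : D₂ *ᵥ (fun _ => (1 : ℝ)) = -(A₂ *ᵥ (fun _ => (1 : ℝ))))
    (p : ℕ) (σ : ℝ) (hσ : 0 < σ) (hp : 1 ≤ p)
    (hpos : ∀ y₁ : ℝ, 0 ≤ y₁ →
      0 < (α ᵥ* (NormedSpace.exp (y₁ • A₁) * D₁)) ⬝ᵥ (fun _ => (1 : ℝ)))
    -- every phase-type density with sub-generator A₁ is ≤_st Erlang(p,σ)
    (h1 : ∀ β : Fin p₁ → ℝ, (∀ i, 0 ≤ β i) → β ⬝ᵥ (fun _ => (1 : ℝ)) = 1 →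
      ∀ x : ℝ, 0 ≤ x →
        (∫ t in Set.Ioi x, (β ᵥ* NormedSpace.exp (t • A₁)) ⬝ᵥ (-(A₁ *ᵥ (fun _ => (1 : ℝ)))))
          ≤ ∫ t in Set.Ioi x, erlangDens p σ t)
    -- every conditional second-coordinate density is ≤_st Erlang(p,σ)
    (h2 : ∀ y₁ : ℝ, 0 ≤ y₁ → ∀ x : ℝ, 0 ≤ x →
      (∫ t in Set.Ioi x,
          ((((α ᵥ* (NormedSpace.exp (y₁ • A₁) * D₁)) ⬝ᵥ (fun _ => (1 : ℝ)))⁻¹ •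
              (α ᵥ* (NormedSpace.exp (y₁ • A₁) * D₁))) ᵥ* NormedSpace.exp (t • A₂)) ⬝ᵥ
            (-(A₂ *ᵥ (fun _ => (1 : ℝ)))))
        ≤ ∫ t in Set.Ioi x, erlangDens p σ t) :
    ∀ Γ : Set (ℝ × ℝ), MeasurableSet Γ →
      Γ ⊆ {q : ℝ × ℝ | 0 ≤ q.1 ∧ 0 ≤ q.2} →
      (∀ q ∈ Γ, ∀ z : ℝ × ℝ, 0 ≤ z.1 → 0 ≤ z.2 → q + z ∈ Γ) →
      (∫ q in Γ,
          (α ᵥ* (NormedSpace.exp (q.1 • A₁) * D₁ * NormedSpace.exp (q.2 • A₂))) ⬝ᵥ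
            (D₂ *ᵥ (fun _ => (1 : ℝ))))
        ≤ ∫ q in Γ, erlangDens p σ q.1 * erlangDens p σ q.2 := by
  intro Γ hΓ hQ hup
  classical
  -- notation
  have hA₁w : ∀ i, 0 ≤ (-(A₁ *ᵥ (fun _ => (1:ℝ)))) i := by
    rw [← hD₁1]; exact mulVec_nonneg' hD₁ fun _ => zero_le_one
  have hA₂w : ∀ i, 0 ≤ (-(A₂ *ᵥ (fun _ => (1:ℝ)))) i := by
    rw [← hD₂1]; exact mulVec_nonneg' hD₂ fun _ => zero_le_one
  have hc_cont : Continuous (fun t : ℝ =>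
      (α ᵥ* NormedSpace.exp (t • A₁)) ⬝ᵥ (-(A₁ *ᵥ (fun _ => (1:ℝ))))) :=
    phDensity_continuous A₁ α _
  have he_cont : Continuous (erlangDens p σ) := erlang_cont p σ
  have hc_nonneg : ∀ t : ℝ, 0 ≤ t →
      0 ≤ (α ᵥ* NormedSpace.exp (t • A₁)) ⬝ᵥ (-(A₁ *ᵥ (fun _ => (1:ℝ)))) := fun t ht =>
    dotProduct_nonneg' (vecMul_nonneg' hα (hexp₁ t ht)) hA₁w
  have he_nonneg : ∀ t : ℝ, 0 ≤ t → 0 ≤ erlangDens p σ t := fun t ht => erlang_nonneg hσ ht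
  have hf_nonneg : ∀ q : ℝ × ℝ, 0 ≤ q.1 → 0 ≤ q.2 →
      0 ≤ (α ᵥ* (NormedSpace.exp (q.1 • A₁) * D₁ * NormedSpace.exp (q.2 • A₂))) ⬝ᵥ
            (D₂ *ᵥ (fun _ => (1:ℝ))) := fun q hq1 hq2 =>
    dotProduct_nonneg'
      (vecMul_nonneg' hα (matMul_nonneg' (matMul_nonneg' (hexp₁ _ hq1) hD₁) (hexp₂ _ hq2)))
      (mulVec_nonneg' hD₂ fun _ => zero_le_one)
  have hcI : IntegrableOn (fun t : ℝ =>
      (α ᵥ* NormedSpace.exp (t • A₁)) ⬝ᵥ (-(A₁ *ᵥ (fun _ => (1:ℝ))))) (Set.Ioi (0:ℝ)) :=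
    phDensity_integrableOn A₁ α hα hα1 hexp₁ hA₁w
  have heI : IntegrableOn (erlangDens p σ) (Set.Ioi (0:ℝ)) := erlang_integrableOn hσ hp
  have hcI' : Integrable ((Set.Ici (0:ℝ)).indicator (fun t : ℝ =>
      (α ᵥ* NormedSpace.exp (t • A₁)) ⬝ᵥ (-(A₁ *ᵥ (fun _ => (1:ℝ)))))) :=
    (integrable_indicator_iff measurableSet_Ici).2 ((integrableOn_Ici_iff_integrableOn_Ioi).2 hcI)
  have heI' : Integrable ((Set.Ici (0:ℝ)).indicator (erlangDens p σ)) :=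
    (integrable_indicator_iff measurableSet_Ici).2 ((integrableOn_Ici_iff_integrableOn_Ioi).2 heI)
  -- product integrability of indicator comparison functions
  have hprodI : ∀ u v : ℝ → ℝ, Continuous u → Continuous v →
      Integrable ((Set.Ici (0:ℝ)).indicator u) → Integrable ((Set.Ici (0:ℝ)).indicator v) →
      Integrable (Γ.indicator (fun q : ℝ × ℝ => u q.1 * v q.2)) (volume.prod volume) := by
    intro u v hu hv hui hvi
    have hB : Integrable (fun q : ℝ × ℝ =>
        (Set.Ici (0:ℝ)).indicator u q.1 * (Set.Ici (0:ℝ)).indicator v q.2)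
        (volume.prod volume) := hui.mul_prod hvi
    refine hB.mono ?_ ?_
    · exact (((hu.comp continuous_fst).mul (hv.comp continuous_snd)).measurable.indicator
        hΓ).aestronglyMeasurable
    · refine Filter.Eventually.of_forall fun q => ?_
      by_cases hq : q ∈ Γ
      · refine le_of_eq ?_
        rw [Set.indicator_of_mem hq, Set.indicator_of_mem (Set.mem_Ici.2 (hQ hq).1),
          Set.indicator_of_mem (Set.mem_Ici.2 (hQ hq).2)]
      · rw [Set.indicator_of_notMem hq]
        simp only [norm_zero]
        exact norm_nonneg _
  have hGi := hprodI _ _ hc_cont he_cont hcI' heI'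
  have hRi := hprodI _ _ he_cont he_cont heI' heI'
  -- rewrite goal as full-space integrals over the product measure
  rw [← integral_indicator hΓ, ← integral_indicator hΓ, Measure.volume_eq_prod ℝ ℝ]
  -- pointwise nonnegativity of the indicators
  have hF_nonneg : ∀ q : ℝ × ℝ, 0 ≤ Γ.indicator (fun q : ℝ × ℝ =>
      (α ᵥ* (NormedSpace.exp (q.1 • A₁) * D₁ * NormedSpace.exp (q.2 • A₂))) ⬝ᵥ
        (D₂ *ᵥ (fun _ => (1:ℝ)))) q := by
    intro q
    by_cases hq : q ∈ Γ
    · rw [Set.indicator_of_mem hq]; exact hf_nonneg q (hQ hq).1 (hQ hq).2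
    · rw [Set.indicator_of_notMem hq]
  have hG_nonneg : ∀ q : ℝ × ℝ, 0 ≤ Γ.indicator (fun q : ℝ × ℝ =>
      ((α ᵥ* NormedSpace.exp (q.1 • A₁)) ⬝ᵥ (-(A₁ *ᵥ (fun _ => (1:ℝ))))) *
        erlangDens p σ q.2) q := by
    intro q
    by_cases hq : q ∈ Γ
    · rw [Set.indicator_of_mem hq]
      exact mul_nonneg (hc_nonneg _ (hQ hq).1) (he_nonneg _ (hQ hq).2)
    · rw [Set.indicator_of_notMem hq]
  have hR_nonneg : ∀ q : ℝ × ℝ, 0 ≤ Γ.indicator (fun q : ℝ × ℝ =>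
      erlangDens p σ q.1 * erlangDens p σ q.2) q := by
    intro q
    by_cases hq : q ∈ Γ
    · rw [Set.indicator_of_mem hq]
      exact mul_nonneg (he_nonneg _ (hQ hq).1) (he_nonneg _ (hQ hq).2)
    · rw [Set.indicator_of_notMem hq]
  by_cases hFi : Integrable (Γ.indicator (fun q : ℝ × ℝ =>
      (α ᵥ* (NormedSpace.exp (q.1 • A₁) * D₁ * NormedSpace.exp (q.2 • A₂))) ⬝ᵥ
        (D₂ *ᵥ (fun _ => (1:ℝ))))) (volume.prod volume)
  case neg =>
    rw [integral_undef hFi]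
    exact integral_nonneg fun q => hR_nonneg q
  case pos =>
  have inner_le : ∀ y₁ : ℝ,
      (∫ y₂, Γ.indicator (fun q : ℝ × ℝ =>
        (α ᵥ* (NormedSpace.exp (q.1 • A₁) * D₁ * NormedSpace.exp (q.2 • A₂))) ⬝ᵥ
          (D₂ *ᵥ (fun _ => (1:ℝ)))) (y₁, y₂))
      ≤ ∫ y₂, Γ.indicator (fun q : ℝ × ℝ =>
        ((α ᵥ* NormedSpace.exp (q.1 • A₁)) ⬝ᵥ (-(A₁ *ᵥ (fun _ => (1:ℝ))))) *
          erlangDens p σ q.2) (y₁, y₂) := by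
    intro y₁
    simp_rw [indicator_slice_left]
    have hs : MeasurableSet {t : ℝ | (y₁, t) ∈ Γ} := hΓ.preimage measurable_prodMk_left
    rw [integral_indicator hs, integral_indicator hs]
    rcases Set.eq_empty_or_nonempty {t : ℝ | (y₁, t) ∈ Γ} with hemp | hne
    · rw [hemp]; simp
    · obtain ⟨y₀, hy₀⟩ := hne
      have hy₁ : 0 ≤ y₁ := (hQ hy₀).1
      have hsub : {t : ℝ | (y₁, t) ∈ Γ} ⊆ Set.Ici 0 := fun z hz => (hQ hz).2
      have hupS : ∀ x ∈ {t : ℝ | (y₁, t) ∈ Γ}, ∀ y, x ≤ y → y ∈ {t : ℝ | (y₁, t) ∈ Γ} := by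
        intro x hx y hxy
        have h := hup _ hx (0, y - x) le_rfl (by simp only; linarith)
        have hpt : (y₁, x) + ((0:ℝ), y - x) = (y₁, y) := by
          rw [Prod.mk_add_mk]; norm_num
        rwa [hpt] at h
      rw [upperSection_integral hsub hupS ⟨y₀, hy₀⟩, upperSection_integral hsub hupS ⟨y₀, hy₀⟩]
      have hb0 : 0 ≤ sInf {t : ℝ | (y₁, t) ∈ Γ} := upperSection_inf_nonneg hsub ⟨y₀, hy₀⟩
      have hcpos := hpos y₁ hy₁
      have hcv : (α ᵥ* (NormedSpace.exp (y₁ • A₁) * D₁)) ⬝ᵥ (fun _ => (1:ℝ)) =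
          (α ᵥ* NormedSpace.exp (y₁ • A₁)) ⬝ᵥ (-(A₁ *ᵥ (fun _ => (1:ℝ)))) := by
        conv_lhs => rw [← Matrix.vecMul_vecMul, ← dotProduct_mulVec, hD₁1]
      have hfeq : ∀ t : ℝ,
          (α ᵥ* (NormedSpace.exp (y₁ • A₁) * D₁ * NormedSpace.exp (t • A₂))) ⬝ᵥ
            (D₂ *ᵥ (fun _ => (1:ℝ))) =
          ((α ᵥ* (NormedSpace.exp (y₁ • A₁) * D₁)) ⬝ᵥ (fun _ => (1:ℝ))) *
            (((((α ᵥ* (NormedSpace.exp (y₁ • A₁) * D₁)) ⬝ᵥ (fun _ => (1:ℝ)))⁻¹ •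
                (α ᵥ* (NormedSpace.exp (y₁ • A₁) * D₁))) ᵥ* NormedSpace.exp (t • A₂)) ⬝ᵥ
              (-(A₂ *ᵥ (fun _ => (1:ℝ))))) := by
        intro t
        rw [Matrix.smul_vecMul, smul_dotProduct, smul_eq_mul, ← mul_assoc,
          mul_inv_cancel₀ (ne_of_gt hcpos), one_mul, Matrix.vecMul_vecMul, ← hD₂1]
      calc (∫ t in Set.Ioi (sInf {t : ℝ | (y₁, t) ∈ Γ}),
              (α ᵥ* (NormedSpace.exp (y₁ • A₁) * D₁ * NormedSpace.exp (t • A₂))) ⬝ᵥ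
                (D₂ *ᵥ (fun _ => (1:ℝ))))
          = ((α ᵥ* (NormedSpace.exp (y₁ • A₁) * D₁)) ⬝ᵥ (fun _ => (1:ℝ))) *
            ∫ t in Set.Ioi (sInf {t : ℝ | (y₁, t) ∈ Γ}),
              ((((α ᵥ* (NormedSpace.exp (y₁ • A₁) * D₁)) ⬝ᵥ (fun _ => (1:ℝ)))⁻¹ •
                (α ᵥ* (NormedSpace.exp (y₁ • A₁) * D₁))) ᵥ* NormedSpace.exp (t • A₂)) ⬝ᵥ
                (-(A₂ *ᵥ (fun _ => (1:ℝ)))) := by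
            simp_rw [hfeq]
            rw [integral_const_mul]
        _ ≤ ((α ᵥ* (NormedSpace.exp (y₁ • A₁) * D₁)) ⬝ᵥ (fun _ => (1:ℝ))) *
            ∫ t in Set.Ioi (sInf {t : ℝ | (y₁, t) ∈ Γ}), erlangDens p σ t :=
            mul_le_mul_of_nonneg_left (h2 y₁ hy₁ _ hb0) (le_of_lt hcpos)
        _ = ∫ t in Set.Ioi (sInf {t : ℝ | (y₁, t) ∈ Γ}),
            ((α ᵥ* NormedSpace.exp (y₁ • A₁)) ⬝ᵥ (-(A₁ *ᵥ (fun _ => (1:ℝ))))) *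
              erlangDens p σ t := by
            rw [integral_const_mul, hcv]
  have inner2_le : ∀ y₂ : ℝ,
      (∫ y₁, Γ.indicator (fun q : ℝ × ℝ =>
        ((α ᵥ* NormedSpace.exp (q.1 • A₁)) ⬝ᵥ (-(A₁ *ᵥ (fun _ => (1:ℝ))))) *
          erlangDens p σ q.2) (y₁, y₂))
      ≤ ∫ y₁, Γ.indicator (fun q : ℝ × ℝ =>
          erlangDens p σ q.1 * erlangDens p σ q.2) (y₁, y₂) := by
    intro y₂
    simp_rw [indicator_slice_right]
    have hs : MeasurableSet {t : ℝ | (t, y₂) ∈ Γ} := hΓ.preimage measurable_prodMk_right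
    rw [integral_indicator hs, integral_indicator hs]
    rcases Set.eq_empty_or_nonempty {t : ℝ | (t, y₂) ∈ Γ} with hemp | hne
    · rw [hemp]; simp
    · obtain ⟨y₀, hy₀⟩ := hne
      have hy₂ : 0 ≤ y₂ := (hQ hy₀).2
      have hsub : {t : ℝ | (t, y₂) ∈ Γ} ⊆ Set.Ici 0 := fun z hz => (hQ hz).1
      have hupS : ∀ x ∈ {t : ℝ | (t, y₂) ∈ Γ}, ∀ y, x ≤ y → y ∈ {t : ℝ | (t, y₂) ∈ Γ} := by
        intro x hx y hxy
        have h := hup _ hx (y - x, 0) (by simp only; linarith) le_rfl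
        have hpt : (x, y₂) + (y - x, (0:ℝ)) = (y, y₂) := by
          rw [Prod.mk_add_mk]; norm_num
        rwa [hpt] at h
      rw [upperSection_integral hsub hupS ⟨y₀, hy₀⟩, upperSection_integral hsub hupS ⟨y₀, hy₀⟩]
      have hb0 : 0 ≤ sInf {t : ℝ | (t, y₂) ∈ Γ} := upperSection_inf_nonneg hsub ⟨y₀, hy₀⟩
      calc (∫ t in Set.Ioi (sInf {t : ℝ | (t, y₂) ∈ Γ}),
              ((α ᵥ* NormedSpace.exp (t • A₁)) ⬝ᵥ (-(A₁ *ᵥ (fun _ => (1:ℝ))))) *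
                erlangDens p σ y₂)
          = (∫ t in Set.Ioi (sInf {t : ℝ | (t, y₂) ∈ Γ}),
              (α ᵥ* NormedSpace.exp (t • A₁)) ⬝ᵥ (-(A₁ *ᵥ (fun _ => (1:ℝ))))) *
              erlangDens p σ y₂ := integral_mul_const _ _
        _ ≤ (∫ t in Set.Ioi (sInf {t : ℝ | (t, y₂) ∈ Γ}), erlangDens p σ t) *
              erlangDens p σ y₂ :=
            mul_le_mul_of_nonneg_right (h1 α hα hα1 _ hb0) (he_nonneg _ hy₂)
        _ = ∫ t in Set.Ioi (sInf {t : ℝ | (t, y₂) ∈ Γ}),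
              erlangDens p σ t * erlangDens p σ y₂ :=
            (integral_mul_const _ _).symm
  calc (∫ q, Γ.indicator (fun q : ℝ × ℝ =>
          (α ᵥ* (NormedSpace.exp (q.1 • A₁) * D₁ * NormedSpace.exp (q.2 • A₂))) ⬝ᵥ
            (D₂ *ᵥ (fun _ => (1:ℝ)))) q ∂(volume.prod volume))
      = ∫ y₁, ∫ y₂, Γ.indicator (fun q : ℝ × ℝ =>
          (α ᵥ* (NormedSpace.exp (q.1 • A₁) * D₁ * NormedSpace.exp (q.2 • A₂))) ⬝ᵥ
            (D₂ *ᵥ (fun _ => (1:ℝ)))) (y₁, y₂) := integral_prod _ hFi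
    _ ≤ ∫ y₁, ∫ y₂, Γ.indicator (fun q : ℝ × ℝ =>
          ((α ᵥ* NormedSpace.exp (q.1 • A₁)) ⬝ᵥ (-(A₁ *ᵥ (fun _ => (1:ℝ))))) *
            erlangDens p σ q.2) (y₁, y₂) :=
        integral_mono_of_nonneg
          (Filter.Eventually.of_forall fun y₁ => integral_nonneg fun y₂ => hF_nonneg (y₁, y₂))
          hGi.integral_prod_left (Filter.Eventually.of_forall inner_le)
    _ = ∫ q, Γ.indicator (fun q : ℝ × ℝ =>
          ((α ᵥ* NormedSpace.exp (q.1 • A₁)) ⬝ᵥ (-(A₁ *ᵥ (fun _ => (1:ℝ))))) *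
            erlangDens p σ q.2) q ∂(volume.prod volume) := (integral_prod _ hGi).symm
    _ = ∫ y₂, ∫ y₁, Γ.indicator (fun q : ℝ × ℝ =>
          ((α ᵥ* NormedSpace.exp (q.1 • A₁)) ⬝ᵥ (-(A₁ *ᵥ (fun _ => (1:ℝ))))) *
            erlangDens p σ q.2) (y₁, y₂) := integral_prod_symm _ hGi
    _ ≤ ∫ y₂, ∫ y₁, Γ.indicator (fun q : ℝ × ℝ =>
          erlangDens p σ q.1 * erlangDens p σ q.2) (y₁, y₂) :=
        integral_mono_of_nonneg
          (Filter.Eventually.of_forall fun y₂ => integral_nonneg fun y₁ => hG_nonneg (y₁, y₂))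
          hRi.integral_prod_right (Filter.Eventually.of_forall inner2_le)
    _ = ∫ q, Γ.indicator (fun q : ℝ × ℝ =>
          erlangDens p σ q.1 * erlangDens p σ q.2) q ∂(volume.prod volume) :=
        (integral_prod_symm _ hRi).symm
end
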